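/- Let E be a finite set, Q an E×E matrix, and P a probability measure on 2^E satisfying P[A ⊆ 𝔄] = det(Q↾A) for all A ⊆ E. Then for any diagonal matrix X with diagonal entries x_e and any A ⊆ E: E[∏_{e∈A} (1_{e∈𝔄} + x_e)] = det((Q+X)↾A). -/

import Mathlib

open Matrix Finset

lemma det_submatrix_congr {E ι κ : Type*} [Fintype ι] [Fintype κ] [DecidableEq ι] [DecidableEq κ]
    (M : Matrix E E ℝ) (f : ι → E) (g : κ → E) (hf : Function.Injective f)
    (hg : Function.Injective g) (h : Set.range f = Set.range g) :
    (M.submatrix f f).det = (M.submatrix g g).det := by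
  let e : ι ≃ κ := (Equiv.ofInjective f hf).trans ((Equiv.setCongr h).trans (Equiv.ofInjective g hg).symm)
  have hge : g ∘ e = f := by
    funext i
    have hmem : f i ∈ Set.range g := h ▸ Set.mem_range_self i
    obtain ⟨a, ha⟩ := hmem
    have : Nonempty κ := ⟨a⟩
    simp only [e, Equiv.trans_apply, Equiv.ofInjective_apply, Equiv.setCongr_apply,
      Equiv.ofInjective_symm_apply]
    exact Function.invFun_eq ⟨a, ha⟩

  rw [← hge, ← Matrix.submatrix_submatrix, Matrix.det_submatrix_equiv_self]

lemma det_piecewise_one {n : Type*} [Fintype n] [DecidableEq n] (M : Matrix n n ℝ) (S : Finset n) :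
    Matrix.det (S.piecewise M (1 : Matrix n n ℝ)) = (M.submatrix (fun a : S => (a : n)) (fun a : S => (a : n))).det := by
  let σ : {x // x ∈ S} ⊕ {x // ¬ x ∈ S} ≃ n := Equiv.sumCompl _
  rw [show S.piecewise M (1 : Matrix n n ℝ) = Matrix.submatrix (Matrix.submatrix (S.piecewise M (1 : Matrix n n ℝ)) σ σ) σ.symm σ.symm by ext i j; simp [Matrix.submatrix], Matrix.det_submatrix_equiv_self σ.symm]
  have : Matrix.submatrix (S.piecewise M (1 : Matrix n n ℝ)) σ σ =
      Matrix.fromBlocks (M.submatrix (fun a : S => (a : n)) (fun a : S => (a : n)))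
        (M.submatrix (fun a : S => (a : n)) (fun a : {x // ¬ x ∈ S} => (a : n))) 0 1 := by
    ext i j
    cases i with
    | inl i =>
      cases j with
      | inl j => simp [σ, Matrix.submatrix, Finset.piecewise, i.2]
      | inr j => simp [σ, Matrix.submatrix, Finset.piecewise, i.2]
    | inr i =>
      cases j with
      | inl j =>
        have : (i : n) ≠ (j : n) := fun h => i.2 (h ▸ j.2)
        simp [σ, Matrix.submatrix, Finset.piecewise, i.2, Matrix.one_apply, this]
      | inr j =>
        simp [σ, Matrix.submatrix, Finset.piecewise, i.2, Matrix.one_apply, Subtype.ext_iff]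
        exact if_congr Iff.rfl rfl rfl
  rw [this, Matrix.det_fromBlocks_zero₂₁, Matrix.det_one, mul_one]

lemma det_add_diagonal {n : Type*} [Fintype n] [DecidableEq n] (M : Matrix n n ℝ) (d : n → ℝ) :
    (M + Matrix.diagonal d).det
      = ∑ S : Finset n, (∏ i ∈ Sᶜ, d i) *
          (M.submatrix (fun a : S => (a : n)) (fun a : S => (a : n))).det := by
  have h1 : (M + Matrix.diagonal d).det
      = ∑ S : Finset n, Matrix.det (S.piecewise M (Matrix.diagonal d)) := by
    exact (Matrix.detRowAlternating : (n → ℝ) [⋀^n]→ₗ[ℝ] ℝ).toMultilinearMap.map_add_univ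
      M (Matrix.diagonal d)
  rw [h1]
  refine Finset.sum_congr rfl fun S _ => ?_
  have h2 : S.piecewise M (Matrix.diagonal d)
      = Sᶜ.piecewise (fun i => d i • (S.piecewise M (1 : Matrix n n ℝ)) i)
          (S.piecewise M (1 : Matrix n n ℝ)) := by
    funext i
    by_cases h : i ∈ S
    · simp [Finset.piecewise, h]
    · funext j
      rcases eq_or_ne i j with rfl | hij
      · simp [Finset.piecewise, h, Matrix.diagonal, Matrix.one_apply]
      · simp [Finset.piecewise, h, Matrix.diagonal, Matrix.one_apply, hij]
  rw [h2]
  have h3 := (Matrix.detRowAlternating : (n → ℝ) [⋀^n]→ₗ[ℝ] ℝ).toMultilinearMap.map_piecewise_smul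
    d (S.piecewise M (1 : Matrix n n ℝ)) Sᶜ
  rw [show Matrix.det (Sᶜ.piecewise (fun i => d i • (S.piecewise M (1 : Matrix n n ℝ)) i)
      (S.piecewise M (1 : Matrix n n ℝ))) = _ from h3]
  rw [smul_eq_mul]
  congr 1
  exact det_piecewise_one M S

/-- If `P[A ⊆ 𝔄] = det(Q↾A)` for all `A ⊆ E`, then for any diagonal matrix `X = diag(x_e)`
and any `A ⊆ E`, `E[∏_{e∈A} (1_{e∈𝔄} + x_e)] = det((Q+X)↾A)`. -/
theorem stmt4 {E : Type*} [Fintype E] [DecidableEq E] (Q : Matrix E E ℝ)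
    (p : Finset E → ℝ)
    (h0 : ∀ B, 0 ≤ p B) (h1 : ∑ B : Finset E, p B = 1)
    (hd : ∀ A : Finset E, ∑ B ∈ Finset.univ.filter (fun B => A ⊆ B), p B
      = (Q.submatrix (fun a : A => (a : E)) (fun a : A => (a : E))).det)
    (x : E → ℝ) (A : Finset E) :
    ∑ B : Finset E, p B * ∏ e ∈ A, ((if e ∈ B then (1:ℝ) else 0) + x e)
      = ((Q + Matrix.diagonal x).submatrix (fun a : A => (a : E)) (fun a : A => (a : E))).det := by
  classical
  -- LHS computation
  have hprod : ∀ B : Finset E, ∏ e ∈ A, ((if e ∈ B then (1:ℝ) else 0) + x e)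
      = ∑ T ∈ A.powerset, (if T ⊆ B then (1:ℝ) else 0) * ∏ e ∈ A \ T, x e := by
    intro B
    rw [Finset.prod_add]
    refine Finset.sum_congr rfl fun T hT => ?_
    congr 1
    by_cases h : T ⊆ B
    · rw [if_pos h]; exact Finset.prod_eq_one fun e he => if_pos (h he)
    · rw [if_neg h]
      obtain ⟨e, he, heB⟩ := Finset.not_subset.mp h
      exact Finset.prod_eq_zero he (if_neg heB)
  have hLHS : ∑ B : Finset E, p B * ∏ e ∈ A, ((if e ∈ B then (1:ℝ) else 0) + x e)
      = ∑ T ∈ A.powerset,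
          (Q.submatrix (fun a : T => (a : E)) (fun a : T => (a : E))).det * ∏ e ∈ A \ T, x e := by
    simp_rw [hprod, Finset.mul_sum]
    rw [Finset.sum_comm]
    refine Finset.sum_congr rfl fun T _ => ?_
    rw [← hd T, Finset.sum_filter, Finset.sum_mul]
    refine Finset.sum_congr rfl fun B _ => ?_
    by_cases h : T ⊆ B <;> simp [h]
  rw [hLHS]
  -- RHS computation
  have hsub : (Q + Matrix.diagonal x).submatrix (fun a : A => (a : E)) (fun a : A => (a : E))
      = Q.submatrix (fun a : A => (a : E)) (fun a : A => (a : E))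
        + Matrix.diagonal (fun a : A => x a) := by
    ext i j
    rcases eq_or_ne i j with rfl | hij
    · simp [Matrix.add_apply, Matrix.diagonal]
    · have : (i : E) ≠ (j : E) := fun h => hij (Subtype.ext h)
      simp [Matrix.add_apply, Matrix.diagonal, hij, this]
  rw [hsub, det_add_diagonal]
  -- bijection between powerset of A and Finsets of ↥A
  refine Finset.sum_bij' (fun T _ => T.subtype (· ∈ A))
    (fun S _ => S.map (Function.Embedding.subtype (· ∈ A))) ?_ ?_ ?_ ?_ ?_
  · intros; exact Finset.mem_univ _
  · intro S _
    rw [Finset.mem_powerset]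
    intro e he
    obtain ⟨a, _, rfl⟩ := Finset.mem_map.mp he
    exact a.2
  · intro T hT
    show (T.subtype (· ∈ A)).map (Function.Embedding.subtype (· ∈ A)) = T
    rw [Finset.subtype_map, Finset.filter_true_of_mem fun e he => Finset.mem_powerset.mp hT he]
  · intro S _
    ext a
    rw [Finset.mem_subtype, Finset.mem_map]
    constructor
    · rintro ⟨b, hb, h⟩
      exact (Subtype.ext h : b = a) ▸ hb
    · intro h
      exact ⟨a, h, rfl⟩
  · intro T hT
    rw [mul_comm]
    congr 1
    · -- products
      have hmap : ((T.subtype (· ∈ A))ᶜ).map (Function.Embedding.subtype (· ∈ A)) = A \ T := by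
      -- fill in
        ext e
        simp only [Finset.mem_map, Finset.mem_compl, Finset.mem_subtype,
          Function.Embedding.coe_subtype, Finset.mem_sdiff]
        constructor
        · rintro ⟨a, ha, rfl⟩; exact ⟨a.2, ha⟩
        · rintro ⟨heA, heT⟩; exact ⟨⟨e, heA⟩, heT, rfl⟩
      rw [← hmap, Finset.prod_map]
      rfl
    · -- determinants
      rw [Matrix.submatrix_submatrix]
      refine det_submatrix_congr Q _ _ Subtype.val_injective
        (Subtype.val_injective.comp Subtype.val_injective) ?_
      ext e
      simp only [Set.mem_range, Function.comp_apply]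
      constructor
      · rintro ⟨a, rfl⟩
        exact ⟨⟨⟨(a : E), Finset.mem_powerset.mp hT a.2⟩, Finset.mem_subtype.mpr a.2⟩, rfl⟩
      · rintro ⟨a, rfl⟩
        exact ⟨⟨_, Finset.mem_subtype.mp a.2⟩, rfl⟩
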